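/- arXiv:0902.0868 — 8 statements merged into one kernel-verified Lean document; each statement's English description precedes it below -/
import Mathlib

section
/- If a non-Kähler almost complex manifold with Norden metric (M,J,g) admits a natural connection ∇' (∇'J = ∇'g = 0) with totally skew-symmetric torsion tensor, then (M,J,g) is quasi-Kählerian, i.e., the cyclic sum over x,y,z of F(x,y,z) vanishes, where F(x,y,z) = g((∇_x J)y,z). -/
/-- If a non-Kähler almost complex manifold with Norden metric admits a natural
connection `∇'` (characterized by `F(x,y,z) = Q(x,y,Jz) - Q(x,Jy,z)` and
`Q(x,y,z) = -Q(x,z,y)`) with totally skew-symmetric torsion tensor `T`, then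
the manifold is quasi-Kählerian: the cyclic sum of `F(x,y,z)=g((∇ₓJ)y,z)`
over `x,y,z` vanishes. -/
theorem natural_skew_torsion_implies_quasi_Kaehler
    {V : Type*} [AddCommGroup V] [Module ℝ V]
    (g : V →ₗ[ℝ] V →ₗ[ℝ] ℝ) (hsymm : ∀ x y, g x y = g y x)
    (J : V →ₗ[ℝ] V) (hJ : ∀ x, J (J x) = -x)
    (hNorden : ∀ x y, g (J x) (J y) = - g x y)
    (nabla nabla' : V → V → V)
    (F Q T : V →ₗ[ℝ] V →ₗ[ℝ] V →ₗ[ℝ] ℝ)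
    (hF : ∀ x y z, F x y z = g (nabla x (J y) - J (nabla x y)) z)
    (hQ : ∀ x y z, Q x y z = g (nabla' x y - nabla x y) z)
    -- naturality of ∇' (∇'J = ∇'g = 0), in its equivalent tensor form:
    (hnat1 : ∀ x y z, F x y z = Q x y (J z) - Q x (J y) z)
    (hnat2 : ∀ x y z, Q x y z = - Q x z y)
    -- the torsion and its total skew-symmetry:
    (hT : ∀ x y z, T x y z = Q x y z - Q y x z)
    (hTskew : ∀ x y z, T x y z = - T x z y)
    -- the manifold is non-Kähler:
    (hnonK : ∃ x y z, F x y z ≠ 0) :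
    ∀ x y z, F x y z + F y z x + F z x y = 0 := by
  have s13 : ∀ a b c, Q a b c = - Q c b a := by
    intro a b c
    have h := hTskew b a c
    rw [hT, hT] at h
    have h2 := hnat2 b a c
    linarith
  have cyc : ∀ a b c, Q a b c = Q c a b := by
    intro a b c
    have h1 := s13 a b c
    have h2 := hnat2 c b a
    linarith
  intro x y z
  rw [hnat1, hnat1, hnat1]
  have c1 := cyc x (J y) z
  have c2 := cyc y (J z) x
  have c3 := cyc z (J x) y
  linarith
end

section
/- Suppose T is a totally skew-symmetric (0,3)-tensor on an almost complex vector space satisfying 3T(x,y,z) + T(Jx,Jy,z) + T(Jx,y,Jz) + T(x,Jy,Jz) = 0 for all x,y,z. Then T(x,y,Jz) = T(x,Jy,z) for all x,y,z. -/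
/-- If `T` is a totally skew-symmetric trilinear (0,3)-tensor on an almost
complex vector space satisfying
`3T(x,y,z) + T(Jx,Jy,z) + T(Jx,y,Jz) + T(x,Jy,Jz) = 0`, then
`T(x,y,Jz) = T(x,Jy,z)` for all `x,y,z`. -/
theorem skew_T_J_identity
    {V : Type*} [AddCommGroup V] [Module ℝ V]
    (J : V →ₗ[ℝ] V) (hJ : ∀ x, J (J x) = -x)
    (T : V →ₗ[ℝ] V →ₗ[ℝ] V →ₗ[ℝ] ℝ)
    (hT12 : ∀ x y z, T x y z = - T y x z)
    (hT23 : ∀ x y z, T x y z = - T x z y)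
    (h : ∀ x y z, 3 * T x y z + T (J x) (J y) z + T (J x) y (J z) +
        T x (J y) (J z) = 0) :
    ∀ x y z, T x y (J z) = T x (J y) z := by
  intro x y z
  have h1 := h x y (J z)
  have h2 := h x (J y) z
  simp only [hJ, map_neg, LinearMap.neg_apply] at h1 h2
  linarith
end

section
/- For the 4-dimensional Lie algebra with brackets [X₁,X₂]=λ₁X₁+λ₂X₂, [X₁,X₃]=λ₃X₂-λ₁X₄, [X₁,X₄]=-λ₃X₁-λ₂X₄, [X₂,X₃]=λ₄X₂+λ₁X₃, [X₂,X₄]=-λ₄X₁+λ₂X₃, [X₃,X₄]=λ₃X₃+λ₄X₄, with J defined by JX₁=X₃, JX₂=X₄, JX₃=-X₁, JX₄=-X₂ and g diagonal with g(X₁,X₁)=g(X₂,X₂)=1, g(X₃,X₃)=g(X₄,X₄)=-1, the bilinear form g̃(x,y)=g(x,Jy) is a Killing form for the bracket: g̃([x,y],z) + g̃(y,[x,z]) = 0 for all x,y,z. -/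
noncomputable section

/-- The basis vectors X₁, X₂, X₃, X₄ (0-indexed). -/
def X (i : Fin 4) : Fin 4 → ℝ := Pi.single i 1

/-- The almost complex structure: JX₁ = X₃, JX₂ = X₄, JX₃ = -X₁, JX₄ = -X₂. -/
def Jm (u : Fin 4 → ℝ) : Fin 4 → ℝ := ![-(u 2), -(u 3), u 0, u 1]

/-- The Norden metric: g(X₁,X₁)=g(X₂,X₂)=1, g(X₃,X₃)=g(X₄,X₄)=-1, off-diagonal 0. -/
def gm (u v : Fin 4 → ℝ) : ℝ := u 0 * v 0 + u 1 * v 1 - u 2 * v 2 - u 3 * v 3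

/-- The bilinear, antisymmetric bracket determined by
[X₁,X₂]=λ₁X₁+λ₂X₂, [X₁,X₃]=λ₃X₂-λ₁X₄, [X₁,X₄]=-λ₃X₁-λ₂X₄,
[X₂,X₃]=λ₄X₂+λ₁X₃, [X₂,X₄]=-λ₄X₁+λ₂X₃, [X₃,X₄]=λ₃X₃+λ₄X₄. -/
def br (l1 l2 l3 l4 : ℝ) (u v : Fin 4 → ℝ) : Fin 4 → ℝ :=
  ![ (u 0 * v 1 - u 1 * v 0) * l1 - (u 0 * v 3 - u 3 * v 0) * l3
       - (u 1 * v 3 - u 3 * v 1) * l4,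
     (u 0 * v 1 - u 1 * v 0) * l2 + (u 0 * v 2 - u 2 * v 0) * l3
       + (u 1 * v 2 - u 2 * v 1) * l4,
     (u 1 * v 2 - u 2 * v 1) * l1 + (u 1 * v 3 - u 3 * v 1) * l2
       + (u 2 * v 3 - u 3 * v 2) * l3,
     -(u 0 * v 2 - u 2 * v 0) * l1 - (u 0 * v 3 - u 3 * v 0) * l2
       + (u 2 * v 3 - u 3 * v 2) * l4 ]

/-- The associated metric g̃(x,y) = g(x,Jy). -/
def gt (u v : Fin 4 → ℝ) : ℝ := gm u (Jm v)

/-- The associated metric g̃ is a Killing form for the bracket: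
g̃([x,y],z) + g̃(y,[x,z]) = 0. -/
theorem associated_metric_killing (l1 l2 l3 l4 : ℝ) :
    ∀ x y z : Fin 4 → ℝ,
      gt (br l1 l2 l3 l4 x y) z + gt y (br l1 l2 l3 l4 x z) = 0 := by
  intro x y z
  simp only [gt, gm, Jm, br, Matrix.cons_val_zero, Matrix.cons_val_one, Matrix.head_cons, Matrix.cons_val_two, Matrix.tail_cons, Matrix.cons_val_three]
  ring
end
end

section
/- For the Lie group manifold (G,J,g) determined by the 4-parametric Lie algebra above, with left-invariant metric g and Levi-Civita connection ∇ computed via the Koszul formula 2g(∇_{X_i}X_j, X_k) = g([X_i,X_j],X_k) + g([X_k,X_i],X_j) + g([X_k,X_j],X_i), the tensor F(x,y,z) = g((∇_xJ)y,z) satisfies the cyclic identity F(x,y,z)+F(y,z,x)+F(z,x,y) = 0 on basis vectors, i.e., (G,J,g) is quasi-Kählerian. -/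
noncomputable section

/-- The diagonal entries g(Xₖ,Xₖ) of the metric. -/
def eps : Fin 4 → ℝ := ![1, 1, -1, -1]

/-- The Levi-Civita connection on basis vectors, via the Koszul formula
2g(∇_{Xᵢ}Xⱼ, Xₖ) = g([Xᵢ,Xⱼ],Xₖ) + g([Xₖ,Xᵢ],Xⱼ) + g([Xₖ,Xⱼ],Xᵢ). -/
def nbB (l1 l2 l3 l4 : ℝ) (i j : Fin 4) : Fin 4 → ℝ := fun k =>
  (eps k)⁻¹ * (1/2) *
    (gm (br l1 l2 l3 l4 (X i) (X j)) (X k) +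
     gm (br l1 l2 l3 l4 (X k) (X i)) (X j) +
     gm (br l1 l2 l3 l4 (X k) (X j)) (X i))

/-- The Levi-Civita connection, extended bilinearly to arbitrary vectors. -/
def nb (l1 l2 l3 l4 : ℝ) (u v : Fin 4 → ℝ) : Fin 4 → ℝ :=
  ∑ i : Fin 4, ∑ j : Fin 4, (u i * v j) • nbB l1 l2 l3 l4 i j

/-- The covariant derivative (∇ₓJ)y = ∇ₓ(Jy) - J(∇ₓy). -/
def DJ (l1 l2 l3 l4 : ℝ) (u v : Fin 4 → ℝ) : Fin 4 → ℝ :=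
  nb l1 l2 l3 l4 u (Jm v) - Jm (nb l1 l2 l3 l4 u v)

/-- The tensor F(x,y,z) = g((∇ₓJ)y, z). -/
def Fm (l1 l2 l3 l4 : ℝ) (x y z : Fin 4 → ℝ) : ℝ :=
  gm (DJ l1 l2 l3 l4 x y) z


lemma fv0 : ((0:Fin 4):ℕ) = 0 := rfl
lemma fv1 : ((1:Fin 4):ℕ) = 1 := rfl
lemma fv2 : ((2:Fin 4):ℕ) = 2 := rfl
lemma fv3 : ((3:Fin 4):ℕ) = 3 := rfl

lemma X0 : X 0 = ![1,0,0,0] := by funext k; fin_cases k <;> simp [X]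
lemma X1 : X 1 = ![0,1,0,0] := by funext k; fin_cases k <;> simp [X]
lemma X2 : X 2 = ![0,0,1,0] := by funext k; fin_cases k <;> simp [X]
lemma X3 : X 3 = ![0,0,0,1] := by funext k; fin_cases k <;> simp [X]

lemma nbB00 (l1 l2 l3 l4 : ℝ) : nbB l1 l2 l3 l4 0 0 = ![0, -l1, 0, -l3] := by
  funext k
  fin_cases k <;>
    · unfold nbB gm br eps
      norm_num [X, Pi.single_apply, Fin.ext_iff, fv0, fv1, fv2, fv3, Matrix.cons_val_zero, Matrix.cons_val_one, Matrix.cons_val_two, Matrix.cons_val_three, Matrix.head_cons, Matrix.tail_cons]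
      try ring

lemma nbB01 (l1 l2 l3 l4 : ℝ) : nbB l1 l2 l3 l4 0 1 = ![l1, 0, l3/2, -l4/2] := by
  funext k
  fin_cases k <;>
    · unfold nbB gm br eps
      norm_num [X, Pi.single_apply, Fin.ext_iff, fv0, fv1, fv2, fv3, Matrix.cons_val_zero, Matrix.cons_val_one, Matrix.cons_val_two, Matrix.cons_val_three, Matrix.head_cons, Matrix.tail_cons]
      try ring

lemma nbB02 (l1 l2 l3 l4 : ℝ) : nbB l1 l2 l3 l4 0 2 = ![0, l3/2, 0, -l1/2] := by
  funext k
  fin_cases k <;>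
    · unfold nbB gm br eps
      norm_num [X, Pi.single_apply, Fin.ext_iff, fv0, fv1, fv2, fv3, Matrix.cons_val_zero, Matrix.cons_val_one, Matrix.cons_val_two, Matrix.cons_val_three, Matrix.head_cons, Matrix.tail_cons]
      try ring

lemma nbB03 (l1 l2 l3 l4 : ℝ) : nbB l1 l2 l3 l4 0 3 = ![-l3, -l4/2, l1/2, 0] := by
  funext k
  fin_cases k <;>
    · unfold nbB gm br eps
      norm_num [X, Pi.single_apply, Fin.ext_iff, fv0, fv1, fv2, fv3, Matrix.cons_val_zero, Matrix.cons_val_one, Matrix.cons_val_two, Matrix.cons_val_three, Matrix.head_cons, Matrix.tail_cons]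
      try ring

lemma nbB10 (l1 l2 l3 l4 : ℝ) : nbB l1 l2 l3 l4 1 0 = ![0, -l2, l3/2, -l4/2] := by
  funext k
  fin_cases k <;>
    · unfold nbB gm br eps
      norm_num [X, Pi.single_apply, Fin.ext_iff, fv0, fv1, fv2, fv3, Matrix.cons_val_zero, Matrix.cons_val_one, Matrix.cons_val_two, Matrix.cons_val_three, Matrix.head_cons, Matrix.tail_cons]
      try ring

lemma nbB11 (l1 l2 l3 l4 : ℝ) : nbB l1 l2 l3 l4 1 1 = ![l2, 0, l4, 0] := by
  funext k
  fin_cases k <;>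
    · unfold nbB gm br eps
      norm_num [X, Pi.single_apply, Fin.ext_iff, fv0, fv1, fv2, fv3, Matrix.cons_val_zero, Matrix.cons_val_one, Matrix.cons_val_two, Matrix.cons_val_three, Matrix.head_cons, Matrix.tail_cons]
      try ring

lemma nbB12 (l1 l2 l3 l4 : ℝ) : nbB l1 l2 l3 l4 1 2 = ![l3/2, l4, 0, -l2/2] := by
  funext k
  fin_cases k <;>
    · unfold nbB gm br eps
      norm_num [X, Pi.single_apply, Fin.ext_iff, fv0, fv1, fv2, fv3, Matrix.cons_val_zero, Matrix.cons_val_one, Matrix.cons_val_two, Matrix.cons_val_three, Matrix.head_cons, Matrix.tail_cons]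
      try ring

lemma nbB13 (l1 l2 l3 l4 : ℝ) : nbB l1 l2 l3 l4 1 3 = ![-l4/2, 0, l2/2, 0] := by
  funext k
  fin_cases k <;>
    · unfold nbB gm br eps
      norm_num [X, Pi.single_apply, Fin.ext_iff, fv0, fv1, fv2, fv3, Matrix.cons_val_zero, Matrix.cons_val_one, Matrix.cons_val_two, Matrix.cons_val_three, Matrix.head_cons, Matrix.tail_cons]
      try ring

lemma nbB20 (l1 l2 l3 l4 : ℝ) : nbB l1 l2 l3 l4 2 0 = ![0, -l3/2, 0, l1/2] := by
  funext k
  fin_cases k <;>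
    · unfold nbB gm br eps
      norm_num [X, Pi.single_apply, Fin.ext_iff, fv0, fv1, fv2, fv3, Matrix.cons_val_zero, Matrix.cons_val_one, Matrix.cons_val_two, Matrix.cons_val_three, Matrix.head_cons, Matrix.tail_cons]
      try ring

lemma nbB21 (l1 l2 l3 l4 : ℝ) : nbB l1 l2 l3 l4 2 1 = ![l3/2, 0, -l1, -l2/2] := by
  funext k
  fin_cases k <;>
    · unfold nbB gm br eps
      norm_num [X, Pi.single_apply, Fin.ext_iff, fv0, fv1, fv2, fv3, Matrix.cons_val_zero, Matrix.cons_val_one, Matrix.cons_val_two, Matrix.cons_val_three, Matrix.head_cons, Matrix.tail_cons]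
      try ring

lemma nbB22 (l1 l2 l3 l4 : ℝ) : nbB l1 l2 l3 l4 2 2 = ![0, -l1, 0, -l3] := by
  funext k
  fin_cases k <;>
    · unfold nbB gm br eps
      norm_num [X, Pi.single_apply, Fin.ext_iff, fv0, fv1, fv2, fv3, Matrix.cons_val_zero, Matrix.cons_val_one, Matrix.cons_val_two, Matrix.cons_val_three, Matrix.head_cons, Matrix.tail_cons]
      try ring

lemma nbB23 (l1 l2 l3 l4 : ℝ) : nbB l1 l2 l3 l4 2 3 = ![l1/2, -l2/2, l3, 0] := by
  funext k
  fin_cases k <;>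
    · unfold nbB gm br eps
      norm_num [X, Pi.single_apply, Fin.ext_iff, fv0, fv1, fv2, fv3, Matrix.cons_val_zero, Matrix.cons_val_one, Matrix.cons_val_two, Matrix.cons_val_three, Matrix.head_cons, Matrix.tail_cons]
      try ring

lemma nbB30 (l1 l2 l3 l4 : ℝ) : nbB l1 l2 l3 l4 3 0 = ![0, -l4/2, l1/2, l2] := by
  funext k
  fin_cases k <;>
    · unfold nbB gm br eps
      norm_num [X, Pi.single_apply, Fin.ext_iff, fv0, fv1, fv2, fv3, Matrix.cons_val_zero, Matrix.cons_val_one, Matrix.cons_val_two, Matrix.cons_val_three, Matrix.head_cons, Matrix.tail_cons]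
      try ring

lemma nbB31 (l1 l2 l3 l4 : ℝ) : nbB l1 l2 l3 l4 3 1 = ![l4/2, 0, -l2/2, 0] := by
  funext k
  fin_cases k <;>
    · unfold nbB gm br eps
      norm_num [X, Pi.single_apply, Fin.ext_iff, fv0, fv1, fv2, fv3, Matrix.cons_val_zero, Matrix.cons_val_one, Matrix.cons_val_two, Matrix.cons_val_three, Matrix.head_cons, Matrix.tail_cons]
      try ring

lemma nbB32 (l1 l2 l3 l4 : ℝ) : nbB l1 l2 l3 l4 3 2 = ![l1/2, -l2/2, 0, -l4] := by
  funext k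
  fin_cases k <;>
    · unfold nbB gm br eps
      norm_num [X, Pi.single_apply, Fin.ext_iff, fv0, fv1, fv2, fv3, Matrix.cons_val_zero, Matrix.cons_val_one, Matrix.cons_val_two, Matrix.cons_val_three, Matrix.head_cons, Matrix.tail_cons]
      try ring

lemma nbB33 (l1 l2 l3 l4 : ℝ) : nbB l1 l2 l3 l4 3 3 = ![l2, 0, l4, 0] := by
  funext k
  fin_cases k <;>
    · unfold nbB gm br eps
      norm_num [X, Pi.single_apply, Fin.ext_iff, fv0, fv1, fv2, fv3, Matrix.cons_val_zero, Matrix.cons_val_one, Matrix.cons_val_two, Matrix.cons_val_three, Matrix.head_cons, Matrix.tail_cons]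
      try ring

set_option maxHeartbeats 4000000 in
/-- (G,J,g) is quasi-Kählerian: the cyclic sum of F vanishes on basis vectors. -/
theorem quasi_Kaehler_cyclic_F (l1 l2 l3 l4 : ℝ) :
    ∀ i j k : Fin 4,
      Fm l1 l2 l3 l4 (X i) (X j) (X k) + Fm l1 l2 l3 l4 (X j) (X k) (X i) +
        Fm l1 l2 l3 l4 (X k) (X i) (X j) = 0 := by
  intro i j k
  have h : ∀ a : Fin 4, a = 0 ∨ a = 1 ∨ a = 2 ∨ a = 3 := by decide
  rcases h i with rfl|rfl|rfl|rfl <;> rcases h j with rfl|rfl|rfl|rfl <;>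
    rcases h k with rfl|rfl|rfl|rfl <;>
    · simp only [Fm, DJ, nb, nbB00, nbB01, nbB02, nbB03, nbB10, nbB11, nbB12, nbB13, nbB20, nbB21, nbB22, nbB23, nbB30, nbB31, nbB32, nbB33, gm, Jm, eps, X0, X1, X2, X3, Fin.sum_univ_four,
        Pi.add_apply, Pi.sub_apply, Pi.smul_apply, smul_eq_mul, Finset.sum_apply,
        Matrix.cons_val_zero, Matrix.cons_val_one, Matrix.head_cons,
        Matrix.cons_val_two, Matrix.tail_cons, Matrix.cons_val_three]
      ring
end
end

section
/- For the 4-parametric family (G,J,g), the square norm ‖∇J‖² = g^{ij}g^{ks} g((∇_{e_i}J)e_k, (∇_{e_j}J)e_s) computed in the basis {X₁,X₂,X₃,X₄} equals -4(λ₁²+λ₂²-λ₃²-λ₄²). In particular, (G,J,g) is isotropic Kähler (‖∇J‖² = 0) iff λ₁²+λ₂²-λ₃²-λ₄² = 0. -/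
noncomputable section

/-- The square norm ‖∇J‖² = gⁱʲgᵏˢ g((∇_{eᵢ}J)eₖ, (∇_{eⱼ}J)eₛ) in the basis {Xᵢ}
(the inverse metric being diagonal with entries 1,1,-1,-1). -/
def sqnormDJ (l1 l2 l3 l4 : ℝ) : ℝ :=
  ∑ i : Fin 4, ∑ k : Fin 4,
    (eps i)⁻¹ * (eps k)⁻¹ *
      gm (DJ l1 l2 l3 l4 (X i) (X k)) (DJ l1 l2 l3 l4 (X i) (X k))


lemma nb_X (l1 l2 l3 l4 : ℝ) (a b : Fin 4) :
    nb l1 l2 l3 l4 (X a) (X b) = nbB l1 l2 l3 l4 a b := by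
  simp [nb, X, Pi.single_apply, ite_smul, mul_ite, Finset.sum_ite_eq']

lemma nb_neg (l1 l2 l3 l4 : ℝ) (u v : Fin 4 → ℝ) :
    nb l1 l2 l3 l4 u (-v) = -(nb l1 l2 l3 l4 u v) := by
  simp [nb, ← Finset.sum_neg_distrib]

lemma Jm_X0 : Jm (X 0) = X 2 := by
  funext k; fin_cases k <;> simp [Jm, X, Pi.single_apply]
lemma Jm_X1 : Jm (X 1) = X 3 := by
  funext k; fin_cases k <;> simp [Jm, X, Pi.single_apply]
lemma Jm_X2 : Jm (X 2) = -(X 0) := by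
  funext k; fin_cases k <;> simp [Jm, X, Pi.single_apply]
lemma Jm_X3 : Jm (X 3) = -(X 1) := by
  funext k; fin_cases k <;> simp [Jm, X, Pi.single_apply]

lemma X_eq (i : Fin 4) : X i = ![![(1:ℝ),0,0,0],![0,1,0,0],![0,0,1,0],![0,0,0,1]] i := by
  fin_cases i <;> funext k <;> fin_cases k <;>
    simp [X, Pi.single_apply, Matrix.vecHead, Matrix.vecTail]

lemma DJ_00 (l1 l2 l3 l4 : ℝ) :
    DJ l1 l2 l3 l4 (X 0) (X 0) = ![0, -l3/2, 0, l1/2] := by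
  funext m
  simp only [DJ, Jm_X0, Jm_X1, Jm_X2, Jm_X3, nb_neg, nb_X]
  fin_cases m <;>
    · norm_num [nbB, X_eq, Pi.sub_apply, Pi.neg_apply, Jm, gm, br, eps,
        Matrix.vecHead, Matrix.vecTail, Matrix.cons_val_three, Matrix.cons_val_two, Matrix.cons_val_one, Matrix.cons_val_zero]
      try ring

lemma DJ_01 (l1 l2 l3 l4 : ℝ) :
    DJ l1 l2 l3 l4 (X 0) (X 1) = ![-l3/2, -l4, -l1/2, 0] := by
  funext m
  simp only [DJ, Jm_X0, Jm_X1, Jm_X2, Jm_X3, nb_neg, nb_X]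
  fin_cases m <;>
    · norm_num [nbB, X_eq, Pi.sub_apply, Pi.neg_apply, Jm, gm, br, eps,
        Matrix.vecHead, Matrix.vecTail, Matrix.cons_val_three, Matrix.cons_val_two, Matrix.cons_val_one, Matrix.cons_val_zero]
      try ring

lemma DJ_02 (l1 l2 l3 l4 : ℝ) :
    DJ l1 l2 l3 l4 (X 0) (X 2) = ![0, l1/2, 0, l3/2] := by
  funext m
  simp only [DJ, Jm_X0, Jm_X1, Jm_X2, Jm_X3, nb_neg, nb_X]
  fin_cases m <;>
    · norm_num [nbB, X_eq, Pi.sub_apply, Pi.neg_apply, Jm, gm, br, eps,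
        Matrix.vecHead, Matrix.vecTail, Matrix.cons_val_three, Matrix.cons_val_two, Matrix.cons_val_one, Matrix.cons_val_zero]
      try ring

lemma DJ_03 (l1 l2 l3 l4 : ℝ) :
    DJ l1 l2 l3 l4 (X 0) (X 3) = ![-l1/2, 0, l3/2, l4] := by
  funext m
  simp only [DJ, Jm_X0, Jm_X1, Jm_X2, Jm_X3, nb_neg, nb_X]
  fin_cases m <;>
    · norm_num [nbB, X_eq, Pi.sub_apply, Pi.neg_apply, Jm, gm, br, eps,
        Matrix.vecHead, Matrix.vecTail, Matrix.cons_val_three, Matrix.cons_val_two, Matrix.cons_val_one, Matrix.cons_val_zero]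
      try ring

lemma DJ_10 (l1 l2 l3 l4 : ℝ) :
    DJ l1 l2 l3 l4 (X 1) (X 0) = ![l3, l4/2, 0, l2/2] := by
  funext m
  simp only [DJ, Jm_X0, Jm_X1, Jm_X2, Jm_X3, nb_neg, nb_X]
  fin_cases m <;>
    · norm_num [nbB, X_eq, Pi.sub_apply, Pi.neg_apply, Jm, gm, br, eps,
        Matrix.vecHead, Matrix.vecTail, Matrix.cons_val_three, Matrix.cons_val_two, Matrix.cons_val_one, Matrix.cons_val_zero]
      try ring

lemma DJ_11 (l1 l2 l3 l4 : ℝ) :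
    DJ l1 l2 l3 l4 (X 1) (X 1) = ![l4/2, 0, -l2/2, 0] := by
  funext m
  simp only [DJ, Jm_X0, Jm_X1, Jm_X2, Jm_X3, nb_neg, nb_X]
  fin_cases m <;>
    · norm_num [nbB, X_eq, Pi.sub_apply, Pi.neg_apply, Jm, gm, br, eps,
        Matrix.vecHead, Matrix.vecTail, Matrix.cons_val_three, Matrix.cons_val_two, Matrix.cons_val_one, Matrix.cons_val_zero]
      try ring

lemma DJ_12 (l1 l2 l3 l4 : ℝ) :
    DJ l1 l2 l3 l4 (X 1) (X 2) = ![0, l2/2, -l3, -l4/2] := by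
  funext m
  simp only [DJ, Jm_X0, Jm_X1, Jm_X2, Jm_X3, nb_neg, nb_X]
  fin_cases m <;>
    · norm_num [nbB, X_eq, Pi.sub_apply, Pi.neg_apply, Jm, gm, br, eps,
        Matrix.vecHead, Matrix.vecTail, Matrix.cons_val_three, Matrix.cons_val_two, Matrix.cons_val_one, Matrix.cons_val_zero]
      try ring

lemma DJ_13 (l1 l2 l3 l4 : ℝ) :
    DJ l1 l2 l3 l4 (X 1) (X 3) = ![-l2/2, 0, -l4/2, 0] := by
  funext m
  simp only [DJ, Jm_X0, Jm_X1, Jm_X2, Jm_X3, nb_neg, nb_X]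
  fin_cases m <;>
    · norm_num [nbB, X_eq, Pi.sub_apply, Pi.neg_apply, Jm, gm, br, eps,
        Matrix.vecHead, Matrix.vecTail, Matrix.cons_val_three, Matrix.cons_val_two, Matrix.cons_val_one, Matrix.cons_val_zero]
      try ring

lemma DJ_20 (l1 l2 l3 l4 : ℝ) :
    DJ l1 l2 l3 l4 (X 2) (X 0) = ![0, -l1/2, 0, -l3/2] := by
  funext m
  simp only [DJ, Jm_X0, Jm_X1, Jm_X2, Jm_X3, nb_neg, nb_X]
  fin_cases m <;>
    · norm_num [nbB, X_eq, Pi.sub_apply, Pi.neg_apply, Jm, gm, br, eps,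
        Matrix.vecHead, Matrix.vecTail, Matrix.cons_val_three, Matrix.cons_val_two, Matrix.cons_val_one, Matrix.cons_val_zero]
      try ring

lemma DJ_21 (l1 l2 l3 l4 : ℝ) :
    DJ l1 l2 l3 l4 (X 2) (X 1) = ![-l1/2, -l2, l3/2, 0] := by
  funext m
  simp only [DJ, Jm_X0, Jm_X1, Jm_X2, Jm_X3, nb_neg, nb_X]
  fin_cases m <;>
    · norm_num [nbB, X_eq, Pi.sub_apply, Pi.neg_apply, Jm, gm, br, eps,
        Matrix.vecHead, Matrix.vecTail, Matrix.cons_val_three, Matrix.cons_val_two, Matrix.cons_val_one, Matrix.cons_val_zero]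
      try ring

lemma DJ_22 (l1 l2 l3 l4 : ℝ) :
    DJ l1 l2 l3 l4 (X 2) (X 2) = ![0, -l3/2, 0, l1/2] := by
  funext m
  simp only [DJ, Jm_X0, Jm_X1, Jm_X2, Jm_X3, nb_neg, nb_X]
  fin_cases m <;>
    · norm_num [nbB, X_eq, Pi.sub_apply, Pi.neg_apply, Jm, gm, br, eps,
        Matrix.vecHead, Matrix.vecTail, Matrix.cons_val_three, Matrix.cons_val_two, Matrix.cons_val_one, Matrix.cons_val_zero]
      try ring

lemma DJ_23 (l1 l2 l3 l4 : ℝ) :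
    DJ l1 l2 l3 l4 (X 2) (X 3) = ![l3/2, 0, l1/2, l2] := by
  funext m
  simp only [DJ, Jm_X0, Jm_X1, Jm_X2, Jm_X3, nb_neg, nb_X]
  fin_cases m <;>
    · norm_num [nbB, X_eq, Pi.sub_apply, Pi.neg_apply, Jm, gm, br, eps,
        Matrix.vecHead, Matrix.vecTail, Matrix.cons_val_three, Matrix.cons_val_two, Matrix.cons_val_one, Matrix.cons_val_zero]
      try ring

lemma DJ_30 (l1 l2 l3 l4 : ℝ) :
    DJ l1 l2 l3 l4 (X 3) (X 0) = ![l1, l2/2, 0, -l4/2] := by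
  funext m
  simp only [DJ, Jm_X0, Jm_X1, Jm_X2, Jm_X3, nb_neg, nb_X]
  fin_cases m <;>
    · norm_num [nbB, X_eq, Pi.sub_apply, Pi.neg_apply, Jm, gm, br, eps,
        Matrix.vecHead, Matrix.vecTail, Matrix.cons_val_three, Matrix.cons_val_two, Matrix.cons_val_one, Matrix.cons_val_zero]
      try ring

lemma DJ_31 (l1 l2 l3 l4 : ℝ) :
    DJ l1 l2 l3 l4 (X 3) (X 1) = ![l2/2, 0, l4/2, 0] := by
  funext m
  simp only [DJ, Jm_X0, Jm_X1, Jm_X2, Jm_X3, nb_neg, nb_X]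
  fin_cases m <;>
    · norm_num [nbB, X_eq, Pi.sub_apply, Pi.neg_apply, Jm, gm, br, eps,
        Matrix.vecHead, Matrix.vecTail, Matrix.cons_val_three, Matrix.cons_val_two, Matrix.cons_val_one, Matrix.cons_val_zero]
      try ring

lemma DJ_32 (l1 l2 l3 l4 : ℝ) :
    DJ l1 l2 l3 l4 (X 3) (X 2) = ![0, -l4/2, -l1, -l2/2] := by
  funext m
  simp only [DJ, Jm_X0, Jm_X1, Jm_X2, Jm_X3, nb_neg, nb_X]
  fin_cases m <;>
    · norm_num [nbB, X_eq, Pi.sub_apply, Pi.neg_apply, Jm, gm, br, eps,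
        Matrix.vecHead, Matrix.vecTail, Matrix.cons_val_three, Matrix.cons_val_two, Matrix.cons_val_one, Matrix.cons_val_zero]
      try ring

lemma DJ_33 (l1 l2 l3 l4 : ℝ) :
    DJ l1 l2 l3 l4 (X 3) (X 3) = ![l4/2, 0, -l2/2, 0] := by
  funext m
  simp only [DJ, Jm_X0, Jm_X1, Jm_X2, Jm_X3, nb_neg, nb_X]
  fin_cases m <;>
    · norm_num [nbB, X_eq, Pi.sub_apply, Pi.neg_apply, Jm, gm, br, eps,
        Matrix.vecHead, Matrix.vecTail, Matrix.cons_val_three, Matrix.cons_val_two, Matrix.cons_val_one, Matrix.cons_val_zero]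
      try ring

/-- ‖∇J‖² = -4(λ₁²+λ₂²-λ₃²-λ₄²); in particular (G,J,g) is isotropic Kähler
iff λ₁²+λ₂²-λ₃²-λ₄² = 0. -/
theorem sqnorm_DJ_eq (l1 l2 l3 l4 : ℝ) :
    sqnormDJ l1 l2 l3 l4 = -4 * (l1^2 + l2^2 - l3^2 - l4^2) ∧
    (sqnormDJ l1 l2 l3 l4 = 0 ↔ l1^2 + l2^2 - l3^2 - l4^2 = 0) := by
  have h : sqnormDJ l1 l2 l3 l4 = -4 * (l1^2 + l2^2 - l3^2 - l4^2) := by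
    simp only [sqnormDJ, Fin.sum_univ_four, DJ_00, DJ_01, DJ_02, DJ_03, DJ_10, DJ_11, DJ_12, DJ_13, DJ_20, DJ_21, DJ_22, DJ_23, DJ_30, DJ_31, DJ_32, DJ_33]
    norm_num [gm, eps, Matrix.vecHead, Matrix.vecTail, Matrix.cons_val_three, Matrix.cons_val_two, Matrix.cons_val_one, Matrix.cons_val_zero]
    ring
  exact ⟨h, by rw [h]; constructor <;> intro hh <;> linarith⟩
end
end

section
/- For the 4-parametric family (G,J,g), the torsion of the unique natural connection with totally skew-symmetric torsion satisfies T(X_i,X_j) = [JX_i,JX_j], and its nonzero (0,3)-components are T₁₃₄=λ₁, T₂₃₄=λ₂, T₁₂₃=-λ₃, T₁₂₄=-λ₄ (up to skew-symmetry). -/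
noncomputable section

/-- The torsion of the unique natural connection with totally skew-symmetric
torsion: 4T(Xᵢ,Xⱼ) = 3[JXᵢ,JXⱼ] - J[Xᵢ,JXⱼ] - J[JXᵢ,Xⱼ] + [Xᵢ,Xⱼ]. -/
def Tt (l1 l2 l3 l4 : ℝ) (i j : Fin 4) : Fin 4 → ℝ :=
  (4 : ℝ)⁻¹ • ((3 : ℝ) • br l1 l2 l3 l4 (Jm (X i)) (Jm (X j))
    - Jm (br l1 l2 l3 l4 (X i) (Jm (X j)))
    - Jm (br l1 l2 l3 l4 (Jm (X i)) (X j))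
    + br l1 l2 l3 l4 (X i) (X j))

/-- T(Xᵢ,Xⱼ) = [JXᵢ,JXⱼ], and the nonzero (0,3)-components are
T₁₃₄ = λ₁, T₂₃₄ = λ₂, T₁₂₃ = -λ₃, T₁₂₄ = -λ₄ (up to skew-symmetry). -/
theorem torsion_components (l1 l2 l3 l4 : ℝ) :
    (∀ i j : Fin 4, Tt l1 l2 l3 l4 i j = br l1 l2 l3 l4 (Jm (X i)) (Jm (X j))) ∧
    gm (Tt l1 l2 l3 l4 0 2) (X 3) = l1 ∧
    gm (Tt l1 l2 l3 l4 1 2) (X 3) = l2 ∧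
    gm (Tt l1 l2 l3 l4 0 1) (X 2) = -l3 ∧
    gm (Tt l1 l2 l3 l4 0 1) (X 3) = -l4 := by
  refine ⟨fun i j => ?_, ?_, ?_, ?_, ?_⟩
  · fin_cases i <;> fin_cases j <;> funext k <;> fin_cases k <;>
    · simp only [Tt, br, Jm, X, Pi.single_apply, Pi.smul_apply, Pi.add_apply,
        Pi.sub_apply, Matrix.cons_val_zero, Matrix.cons_val_one, Matrix.head_cons,
        Matrix.cons_val_two, Matrix.tail_cons, Matrix.cons_val_three, smul_eq_mul,
        Fin.isValue, Fin.reduceEq, Fin.zero_eta, Fin.mk_one, Fin.reduceFinMk,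
        if_true, if_false, ite_true, ite_false, reduceIte]
      ring
  all_goals
  · simp only [gm, Tt, br, Jm, X, Pi.single_apply, Pi.smul_apply, Pi.add_apply,
      Pi.sub_apply, Matrix.cons_val_zero, Matrix.cons_val_one, Matrix.head_cons,
      Matrix.cons_val_two, Matrix.tail_cons, Matrix.cons_val_three, smul_eq_mul,
      Fin.isValue, Fin.reduceEq, Fin.zero_eta, Fin.mk_one, Fin.reduceFinMk,
      if_true, if_false, ite_true, ite_false, reduceIte]
    ring
end
end

section
/- For the 4-parametric family (G,J,g), the identity [JX_i,JX_j] + J[JX_i,X_j] = [X_i,X_j] - J[X_i,JX_j] holds for all i,j. -/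
noncomputable section

/-- [JXᵢ,JXⱼ] + J[JXᵢ,Xⱼ] = [Xᵢ,Xⱼ] - J[Xᵢ,JXⱼ] for all i,j. -/
theorem bracket_J_identity (l1 l2 l3 l4 : ℝ) :
    ∀ i j : Fin 4,
      br l1 l2 l3 l4 (Jm (X i)) (Jm (X j)) +
        Jm (br l1 l2 l3 l4 (Jm (X i)) (X j)) =
      br l1 l2 l3 l4 (X i) (X j) - Jm (br l1 l2 l3 l4 (X i) (Jm (X j))) := by
  have key : ∀ u v : Fin 4 → ℝ,
      br l1 l2 l3 l4 (Jm u) (Jm v) + Jm (br l1 l2 l3 l4 (Jm u) v) =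
      br l1 l2 l3 l4 u v - Jm (br l1 l2 l3 l4 u (Jm v)) := by
    intro u v
    funext k
    fin_cases k <;> simp [Jm, br] <;> ring
  intro i j
  exact key (X i) (X j)
end
end

section
/- Let ∇' be a metric connection with parallel totally skew-symmetric torsion T on a pseudo-Riemannian manifold, Q = (1/2)T its transformation tensor. Then the curvature tensors satisfy R'(x,y,z,w) = R(x,y,z,w) + 2g(Q(x,y),Q(z,w)) - g(Q(x,z),Q(y,w)) + g(Q(y,z),Q(x,w)). Moreover, R' satisfies the first Bianchi identity (and hence is curvature-like together with R's symmetries) iff the cyclic sum over x,y,z of g(Q(x,y),Q(z,w)) vanishes. -/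
/-- For a metric connection `∇' = ∇ + Q` with parallel totally skew-symmetric
torsion `T = 2Q` on a pseudo-Riemannian manifold (modelled algebraically, with
function ring `R`, vector fields `V`, directional derivative `d`), the
curvature tensors satisfy
`R'(x,y,z,w) = R(x,y,z,w) + 2g(Q(x,y),Q(z,w)) - g(Q(x,z),Q(y,w)) + g(Q(y,z),Q(x,w))`,
and `R'` satisfies the first Bianchi identity iff the cyclic sum over `x,y,z`
of `g(Q(x,y),Q(z,w))` vanishes. -/
theorem parallel_skew_torsion_curvature
    {R V : Type*} [CommRing R] [Algebra ℝ R] [AddCommGroup V] [Module R V]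
    (g : V →ₗ[R] V →ₗ[R] R) (hsymm : ∀ x y, g x y = g y x)
    (nabla : V → V → V) (Q : V → V → V) (d : V → R → R)
    -- metric compatibility of the Levi-Civita connection:
    (hmetric : ∀ x y z, d x (g y z) = g (nabla x y) z + g y (nabla x z))
    -- Q = (1/2)T is a 3-form:
    (hQ12 : ∀ x y z, g (Q x y) z = - g (Q y x) z)
    (hQ23 : ∀ x y z, g (Q x y) z = - g (Q x z) y)
    -- the torsion is parallel: ∇'Q = 0 for ∇' = ∇ + Q:
    (hpar : ∀ x y z w, d x (g (Q y z) w) =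
        g (Q (nabla x y + Q x y) z) w + g (Q y (nabla x z + Q x z)) w +
          g (Q y z) (nabla x w + Q x w))
    -- the (0,4)-curvature of the Levi-Civita connection and its first Bianchi identity:
    (Rm : V → V → V → V → R)
    (hBianchi : ∀ x y z w, Rm x y z w + Rm y z x w + Rm z x y w = 0)
    -- the (0,4)-curvature R' of ∇', via the general formula
    -- R' = R + (∇ₓQ)(y,z,w) - (∇_yQ)(x,z,w) + Q(x,Q(y,z),w) - Q(y,Q(x,z),w):
    (R' : V → V → V → V → R)
    (hR' : ∀ x y z w, R' x y z w = Rm x y z w +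
        (d x (g (Q y z) w) - g (Q (nabla x y) z) w - g (Q y (nabla x z)) w -
          g (Q y z) (nabla x w)) -
        (d y (g (Q x z) w) - g (Q (nabla y x) z) w - g (Q x (nabla y z)) w -
          g (Q x z) (nabla y w)) +
        g (Q x (Q y z)) w - g (Q y (Q x z)) w) :
    (∀ x y z w, R' x y z w = Rm x y z w + 2 * g (Q x y) (Q z w) -
        g (Q x z) (Q y w) + g (Q y z) (Q x w)) ∧
    ((∀ x y z w, R' x y z w + R' y z x w + R' z x y w = 0) ↔
      (∀ x y z w, g (Q x y) (Q z w) + g (Q y z) (Q x w) +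
        g (Q z x) (Q y w) = 0)) := by
  have key1 : ∀ a z w, g (Q a z) w = g (Q z w) a := by
    intro a z w
    rw [hQ12 a z w, hQ23 z a w]
    ring
  have split1 : ∀ a b z w, g (Q (a + b) z) w = g (Q a z) w + g (Q b z) w := by
    intro a b z w
    calc g (Q (a + b) z) w = g (Q z w) (a + b) := key1 _ _ _
      _ = g (Q z w) a + g (Q z w) b := map_add _ _ _
      _ = g (Q a z) w + g (Q b z) w := by rw [key1 a z w, key1 b z w]
  have split2 : ∀ y a b w, g (Q y (a + b)) w = g (Q y a) w + g (Q y b) w := by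
    intro y a b w
    rw [hQ23 y (a + b) w, hQ23 y a w, hQ23 y b w, map_add (g (Q y w)) a b]
    ring
  have h1 : ∀ x y z w, R' x y z w = Rm x y z w + 2 * g (Q x y) (Q z w) -
      g (Q x z) (Q y w) + g (Q y z) (Q x w) := by
    intro x y z w
    have hx := hpar x y z w
    have hy := hpar y x z w
    rw [split1, split2, map_add (g (Q y z))] at hx
    rw [split1, split2, map_add (g (Q x z))] at hy
    rw [hR', hx, hy]
    have c1 : g (Q (Q x y) z) w = g (Q x y) (Q z w) := by rw [key1, hsymm]
    have c2 : g (Q (Q y x) z) w = - g (Q x y) (Q z w) := by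
      rw [key1, hsymm, hQ12]
    linear_combination c1 - c2
  refine ⟨h1, ?_⟩
  have h2 : ∀ x y z w, R' x y z w + R' y z x w + R' z x y w =
      4 * (g (Q x y) (Q z w) + g (Q y z) (Q x w) + g (Q z x) (Q y w)) := by
    intro x y z w
    rw [h1, h1, h1]
    have b := hBianchi x y z w
    have s1 : g (Q x z) (Q y w) = - g (Q z x) (Q y w) := hQ12 x z (Q y w)
    have s2 : g (Q y x) (Q z w) = - g (Q x y) (Q z w) := hQ12 y x (Q z w)
    have s3 : g (Q z y) (Q x w) = - g (Q y z) (Q x w) := hQ12 z y (Q x w)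
    linear_combination b - s1 - s2 - s3
  constructor
  · intro hB x y z w
    have h4 : (4 : R) * (g (Q x y) (Q z w) + g (Q y z) (Q x w) +
        g (Q z x) (Q y w)) = 0 := by
      rw [← h2 x y z w]; exact hB x y z w
    have h4' : ((4 : ℝ) • (g (Q x y) (Q z w) + g (Q y z) (Q x w) +
        g (Q z x) (Q y w)) : R) = 0 := by
      rw [Algebra.smul_def, map_ofNat]; exact h4
    calc g (Q x y) (Q z w) + g (Q y z) (Q x w) + g (Q z x) (Q y w)
        = ((1/4 : ℝ) * 4) • (g (Q x y) (Q z w) + g (Q y z) (Q x w) +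
            g (Q z x) (Q y w)) := by norm_num
      _ = (1/4 : ℝ) • ((4 : ℝ) • (g (Q x y) (Q z w) + g (Q y z) (Q x w) +
            g (Q z x) (Q y w))) := by rw [smul_smul]
      _ = 0 := by rw [h4', smul_zero]
  · intro hS x y z w
    rw [h2 x y z w, hS x y z w, mul_zero]
end
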